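/- Let φ(h,t) = (4 − 2·δ_oct·h·t·(h+t))/3, t_0 = 1.255, and A(h) = (1 − h/t_0)(φ(h,t_0) − φ(t_0,t_0)). Then for all h ∈ [1, t_0]: A(h) ≥ 0, A'(h) ≤ 0, and A''(h) ≥ 0. -/

import Mathlib

open Real

noncomputable def kepZeta : ℝ := (2 * Real.arctan (Real.sqrt 2 / 5))⁻¹

noncomputable def deltaOct : ℝ := (Real.pi - 2 / kepZeta) / Real.sqrt 8

noncomputable def kepPhi (h t : ℝ) : ℝ := (4 - 2 * deltaOct * h * t * (h + t)) / 3

noncomputable def kepA (h : ℝ) : ℝ :=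
  (1 - h / 1.255) * (kepPhi h 1.255 - kepPhi 1.255 1.255)

lemma deltaOct_nonneg : 0 ≤ deltaOct := by
  have h2 : Real.sqrt 2 ≤ 1.5 := by
    rw [show (1.5 : ℝ) = Real.sqrt (1.5 ^ 2) by
      rw [Real.sqrt_sq]; norm_num]
    apply Real.sqrt_le_sqrt; norm_num
  have harct : Real.arctan (Real.sqrt 2 / 5) ≤ Real.pi / 4 := by
    rw [← Real.arctan_one]
    apply Real.arctan_strictMono.monotone
    nlinarith [Real.sqrt_nonneg 2]
  have hζ : 2 / kepZeta = 4 * Real.arctan (Real.sqrt 2 / 5) := by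
    unfold kepZeta; field_simp; ring
  have hpi := Real.pi_pos
  apply div_nonneg
  · rw [hζ]; nlinarith
  · exact Real.sqrt_nonneg 8

lemma kepA_eq : kepA = fun h : ℝ =>
    (2 * deltaOct / 3) * (h ^ 3 - 3 * 1.255 ^ 2 * h + 2 * 1.255 ^ 3) := by
  funext h
  unfold kepA kepPhi
  ring

lemma hasDerivAt_kepA (h : ℝ) :
    HasDerivAt kepA (2 * deltaOct * (h ^ 2 - 1.255 ^ 2)) h := by
  rw [kepA_eq]
  have H : HasDerivAt (fun h : ℝ => h ^ 3 - 3 * 1.255 ^ 2 * h + 2 * 1.255 ^ 3)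
      (3 * h ^ 2 - 3 * 1.255 ^ 2) h := by
    have h1 := hasDerivAt_pow 3 h
    have h2 := (hasDerivAt_id h).const_mul (3 * (1.255 : ℝ) ^ 2)
    have := (h1.sub h2).add_const (2 * (1.255 : ℝ) ^ 3)
    exact this.congr_deriv (by push_cast; ring)
  have := H.const_mul (2 * deltaOct / 3)
  exact this.congr_deriv (by ring)

lemma deriv_kepA : deriv kepA = fun h : ℝ => 2 * deltaOct * (h ^ 2 - 1.255 ^ 2) := by
  funext h
  exact (hasDerivAt_kepA h).deriv

lemma deriv2_kepA (h : ℝ) : deriv (deriv kepA) h = 4 * deltaOct * h := by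
  rw [deriv_kepA]
  have H : HasDerivAt (fun h : ℝ => 2 * deltaOct * (h ^ 2 - 1.255 ^ 2))
      (4 * deltaOct * h) h := by
    have h1 := (hasDerivAt_pow 2 h).sub_const ((1.255 : ℝ) ^ 2)
    have := h1.const_mul (2 * deltaOct)
    exact this.congr_deriv (by push_cast; ring)
  exact H.deriv

theorem stmt_10 :
    ∀ h ∈ Set.Icc (1 : ℝ) 1.255,
      0 ≤ kepA h ∧ deriv kepA h ≤ 0 ∧ 0 ≤ deriv (deriv kepA) h := by
  intro h hh
  obtain ⟨h1, h2⟩ := hh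
  have hδ := deltaOct_nonneg
  refine ⟨?_, ?_, ?_⟩
  · rw [kepA_eq]
    have key : (0:ℝ) ≤ (1.255 - h) ^ 2 * (h + 2 * 1.255) := by positivity
    nlinarith [key]
  · rw [deriv_kepA]
    have : h ^ 2 ≤ (1.255 : ℝ) ^ 2 := by nlinarith
    nlinarith
  · rw [deriv2_kepA]
    positivity
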